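/- arXiv:2302.01212 — 5 statements merged into one kernel-verified Lean document; each statement's English description precedes it below -/
import Mathlib

section
/- Let γ ≥ 1/2 and ε ∈ (0,1). Let G be a finite D-regular graph together with, for each vertex v, a bijection labeling the D edges incident to v by {1,…,D} (write e_v^i for the edge labeled i at v), and let H be a graph on vertex set {1,…,D}. Suppose (1) every S ⊆ V(G) with |S| ≤ ε|V(G)| satisfies 2e(S) ≤ γ|S|, and (2) P_H(t) ≥ 12γ/t for all real t with 1 ≤ t ≤ 2γ. Let Z = G ◇ H be the line product. Then every nonempty T ⊆ V(Z) with |T| ≤ (ε/D)·|V(Z)| satisfies |UN_Z(T)| ≥ (P_H(2γ)/3)·|T|. -/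
open scoped Classical

noncomputable section

namespace UNE

/-- The set of neighbors of a vertex set `S`. -/
def nbrSet {V : Type*} (G : SimpleGraph V) (S : Set V) : Set V :=
  {v | ∃ u ∈ S, G.Adj v u}

/-- The set of unique-neighbors of `S`: vertices with exactly one neighbor in `S`. -/
def uniqueNbrs {V : Type*} (G : SimpleGraph V) (S : Set V) : Set V :=
  {v | ∃! u, u ∈ S ∧ G.Adj v u}

/-- Degree of a vertex. -/
def deg {V : Type*} (G : SimpleGraph V) (v : V) : ℕ :=
  {u | G.Adj v u}.ncard

/-- `L, R` is a bipartition of `G`. -/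
structure IsBipartition {V : Type*} (G : SimpleGraph V) (L R : Set V) : Prop where
  disj : Disjoint L R
  cover : L ∪ R = Set.univ
  cross : ∀ ⦃u v⦄, G.Adj u v → (u ∈ L ∧ v ∈ R) ∨ (u ∈ R ∧ v ∈ L)

/-- `G` is `(c,d)`-biregular with parts `L` and `R`. -/
structure IsBiregular {V : Type*} (G : SimpleGraph V) (L R : Set V) (c d : ℕ)
    extends IsBipartition G L R : Prop where
  degL : ∀ v ∈ L, deg G v = c
  degR : ∀ v ∈ R, deg G v = d

/-- Adjacency matrix over ℝ. -/
def adjMat {V : Type*} (G : SimpleGraph V) : Matrix V V ℝ :=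
  Matrix.of fun u v => if G.Adj u v then (1 : ℝ) else 0

/-- Diagonal degree matrix. -/
def degMat {V : Type*} (G : SimpleGraph V) : Matrix V V ℝ :=
  Matrix.diagonal fun v => (deg G v : ℝ)

/-- Bethe Hessian `H_G(t) = (D - I) t² - t A + I`. -/
def betheHessian {V : Type*} (G : SimpleGraph V) (t : ℝ) : Matrix V V ℝ :=
  t ^ 2 • (degMat G - 1) - t • adjMat G + 1

/-- The second largest eigenvalue (with multiplicity) of a square real matrix,
read off from the multiset of real roots of its characteristic polynomial. -/
def secondEig {V : Type*} [Fintype V] (A : Matrix V V ℝ) : ℝ :=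
  (A.charpoly.roots.sort (· ≤ ·)).getD ((A.charpoly.roots.sort (· ≤ ·)).length - 2) 0

/-- Orientations of edges of `G`. -/
abbrev Orient {V : Type*} (G : SimpleGraph V) : Type _ := {p : V × V // G.Adj p.1 p.2}

/-- The non-backtracking matrix of `G`. -/
def nonBacktracking {V : Type*} (G : SimpleGraph V) : Matrix (Orient G) (Orient G) ℝ :=
  Matrix.of fun e f => if e.1.2 = f.1.1 ∧ e.1.1 ≠ f.1.2 then (1 : ℝ) else 0

/-- Spectral radius: largest absolute value of a complex eigenvalue. -/
def specRad {n : Type*} [Fintype n] (A : Matrix n n ℝ) : ℝ :=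
  (((A.map fun x => (x : ℂ)).charpoly.roots.map fun z => ‖z‖).toList.foldr max 0)

/-- `G` contains a bicycle (connected subgraph with one more edge than vertices)
on at most `ℓ` vertices. -/
def HasBicycle {V : Type*} (G : SimpleGraph V) (ℓ : ℝ) : Prop :=
  ∃ H : G.Subgraph, H.Connected ∧ H.edgeSet.ncard = H.verts.ncard + 1 ∧ (H.verts.ncard : ℝ) ≤ ℓ

/-- `G` contains a cycle of length at most `ℓ`. -/
def HasCycleLe {V : Type*} (G : SimpleGraph V) (ℓ : ℝ) : Prop :=
  ∃ (v : V) (w : G.Walk v v), w.IsCycle ∧ (w.length : ℝ) ≤ ℓ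

/-- Number of edges of `G` with both endpoints in `S`. -/
def eInside {V : Type*} (G : SimpleGraph V) (S : Set V) : ℕ :=
  {e ∈ G.edgeSet | ∀ v ∈ e, v ∈ S}.ncard

/-- Number of edges of `G` with one endpoint in `S` and the other in `T`. -/
def eBetween {V : Type*} (G : SimpleGraph V) (S T : Set V) : ℕ :=
  {e ∈ G.edgeSet | ∃ u ∈ S, ∃ v ∈ T, e = s(u, v)}.ncard

/-- Unique-neighbor expansion profile `P_H(t)`. -/
def profile {V : Type*} (H : SimpleGraph V) (t : ℝ) : ℝ :=
  sInf {r | ∃ S : Set V, S.Nonempty ∧ (S.ncard : ℝ) ≤ t ∧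
    r = ((uniqueNbrs H S).ncard : ℝ) / (S.ncard : ℝ)}


lemma two_endpoints {V : Type} [Fintype V] (G : SimpleGraph V) (e : Sym2 V) (he : e ∈ G.edgeSet) :
    (Finset.univ.filter (fun v => v ∈ e)).card = 2 := by
  induction e with
  | _ a b =>
    have hab : a ≠ b := G.ne_of_adj ((G.mem_edgeSet).mp he)
    have h2 : (Finset.univ.filter (fun v => v ∈ s(a,b))) = {a, b} := by
      ext x; simp [Sym2.mem_iff]
    rw [h2, Finset.card_insert_of_notMem (by simp [hab]), Finset.card_singleton]

lemma double_count {V : Type} [Fintype V] (F : Finset (Sym2 V)) (W : Finset V) :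
    ∑ v ∈ W, (F.filter (fun e => v ∈ e)).card = ∑ e ∈ F, (W.filter (fun v => v ∈ e)).card := by
  simp_rw [Finset.card_filter]
  exact Finset.sum_comm

lemma edge_eq_pair {V : Type} (e : Sym2 V)
    (v w : V) (hv : v ∈ e) (hw : w ∈ e) (hvw : v ≠ w) : ∀ x ∈ e, x = v ∨ x = w := by
  induction e with
  | _ a b =>
    intro x hx
    rw [Sym2.mem_iff] at hv hw hx
    rcases hv with rfl | rfl <;> rcases hw with rfl | rfl <;> rcases hx with rfl | rfl <;> tauto

set_option maxHeartbeats 2000000 in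
/-- **Expansion profile of the line product** (Lemma `lem:line-analysis`).
`G` is a `D`-regular graph whose edges at each vertex `v` are labeled by `Fin D`
via `eLab v`; `H` is a graph on `Fin D`; `Z` is the line product `G ◇ H`, a graph on the
edge set of `G` in which `eLab v i` and `eLab v j` are joined whenever `{i,j} ∈ E(H)`.
If small sets in `G` span few edges and `P_H(t) ≥ 12γ/t` for `1 ≤ t ≤ 2γ`, then every
nonempty `T ⊆ V(Z)` with `|T| ≤ (ε/D)|V(Z)|` has at least `(P_H(2γ)/3)·|T|`
unique-neighbors. -/
theorem line_product_expansion {V : Type} [Fintype V]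
    (γ ε : ℝ) (hγ : 1 / 2 ≤ γ) (hε0 : 0 < ε) (hε1 : ε < 1)
    (G : SimpleGraph V) (D : ℕ)
    (hreg : ∀ v, deg G v = D)
    (eLab : V → Fin D → Sym2 V)
    (hLab_mem : ∀ v i, eLab v i ∈ G.edgeSet ∧ v ∈ eLab v i)
    (hLab_inj : ∀ v, Function.Injective (eLab v))
    (H : SimpleGraph (Fin D))
    (Z : SimpleGraph G.edgeSet)
    (hZ : ∀ e f : G.edgeSet, Z.Adj e f ↔
      ∃ (v : V) (i j : Fin D), H.Adj i j ∧ (e : Sym2 V) = eLab v i ∧ (f : Sym2 V) = eLab v j)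
    (hG : ∀ S : Set V, (S.ncard : ℝ) ≤ ε * (Fintype.card V : ℝ) →
      2 * (eInside G S : ℝ) ≤ γ * (S.ncard : ℝ))
    (hH : ∀ t : ℝ, 1 ≤ t → t ≤ 2 * γ → 12 * γ / t ≤ profile H t) :
    ∀ T : Set G.edgeSet, T.Nonempty →
      (T.ncard : ℝ) ≤ (ε / (D : ℝ)) * (Nat.card G.edgeSet : ℝ) →
      (profile H (2 * γ) / 3) * (T.ncard : ℝ) ≤ ((uniqueNbrs Z T).ncard : ℝ) := by
  intro T hTne hTcard
  set n := Fintype.card V with hn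
  set p := profile H (2 * γ) with hp
  -- degrees
  have hdeg : ∀ v, G.degree v = D := by
    intro v
    rw [← hreg v]
    show G.degree v = (G.neighborSet v).ncard
    rw [Set.ncard_eq_toFinset_card']
    exact ((Set.toFinset_card _).trans (G.card_neighborSet_eq_degree v)).symm
  -- unique labels
  have hlab : ∀ (v : V) (e : Sym2 V), e ∈ G.edgeSet → v ∈ e → ∃! i, eLab v i = e := by
    intro v e he hve
    have hinj : Function.Injective (eLab v) := hLab_inj v
    have hsub : (Finset.univ.image (eLab v)) ⊆ G.incidenceFinset v := by
      intro x hx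
      obtain ⟨i, _, rfl⟩ := Finset.mem_image.mp hx
      rw [SimpleGraph.mem_incidenceFinset]
      exact ⟨(hLab_mem v i).1, (hLab_mem v i).2⟩
    have hcard : (G.incidenceFinset v).card = D := by
      rw [G.card_incidenceFinset_eq_degree, hdeg]
    have himg : Finset.univ.image (eLab v) = G.incidenceFinset v := by
      apply Finset.eq_of_subset_of_card_le hsub
      rw [hcard, Finset.card_image_of_injective _ hinj, Finset.card_univ, Fintype.card_fin]
    have hein : e ∈ G.incidenceFinset v := by
      rw [SimpleGraph.mem_incidenceFinset]; exact ⟨he, hve⟩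
    rw [← himg] at hein
    obtain ⟨i, _, hi⟩ := Finset.mem_image.mp hein
    exact ⟨i, hi, fun j hj => hinj (hj.trans hi.symm)⟩
  -- the finset of edges of T
  set TF : Finset (Sym2 V) := (Set.toFinset T).image Subtype.val with hTFdef
  have hTFmem : ∀ e : Sym2 V, e ∈ TF ↔ ∃ he : e ∈ G.edgeSet, (⟨e, he⟩ : G.edgeSet) ∈ T := by
    intro e
    simp only [hTFdef, Finset.mem_image, Set.mem_toFinset]
    constructor
    · rintro ⟨x, hx, rfl⟩; exact ⟨x.2, hx⟩
    · rintro ⟨he, hx⟩; exact ⟨⟨e, he⟩, hx, rfl⟩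
  have hTFcard : TF.card = T.ncard := by
    rw [hTFdef, Finset.card_image_of_injective _ Subtype.val_injective,
      Set.ncard_eq_toFinset_card']
  have hTFedge : ∀ e ∈ TF, e ∈ G.edgeSet := fun e he => (hTFmem e).mp he |>.fst
  -- local label sets
  set tF : V → Finset (Fin D) :=
    fun v => Finset.univ.filter (fun i => (⟨eLab v i, (hLab_mem v i).1⟩ : G.edgeSet) ∈ T)
    with htFdef
  set t : V → ℕ := fun v => (tF v).card with htdef
  have htv : ∀ v, t v = (TF.filter (fun e => v ∈ e)).card := by
    intro v
    show (tF v).card = _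
    apply Finset.card_bij (fun i _ => eLab v i)
    · intro i hi
      rw [htFdef] at hi
      simp only [Finset.mem_filter, Finset.mem_univ, true_and] at hi
      rw [Finset.mem_filter]
      exact ⟨(hTFmem _).mpr ⟨(hLab_mem v i).1, hi⟩, (hLab_mem v i).2⟩
    · intro a _ b _ hab; exact hLab_inj v hab
    · intro e he
      rw [Finset.mem_filter] at he
      obtain ⟨heT, hve⟩ := he
      obtain ⟨hee, hT⟩ := (hTFmem e).mp heT
      obtain ⟨i, hi, -⟩ := hlab v e hee hve
      refine ⟨i, ?_, hi⟩
      rw [htFdef]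
      simp only [Finset.mem_filter, Finset.mem_univ, true_and]
      have h2 : (⟨eLab v i, (hLab_mem v i).1⟩ : G.edgeSet) = ⟨e, hee⟩ := Subtype.ext hi
      rw [h2]; exact hT
  have hsum : ∑ v, t v = 2 * TF.card := by
    rw [Finset.sum_congr rfl (fun v _ => htv v), double_count]
    rw [Finset.sum_congr rfl (fun e he => two_endpoints G e (hTFedge e he))]
    simp [Finset.sum_const, Nat.smul_one_eq_cast, mul_comm]
  -- S, Light, Heavy
  set SF : Finset V := Finset.univ.filter (fun v => 0 < t v) with hSFdef
  set LF : Finset V := SF.filter (fun v => (t v : ℝ) ≤ 2 * γ) with hLFdef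
  set HF : Finset V := SF.filter (fun v => ¬ (t v : ℝ) ≤ 2 * γ) with hHFdef
  have hLHS : LF.card + HF.card = SF.card := Finset.card_filter_add_card_filter_not _
  have hLsub : LF ⊆ SF := Finset.filter_subset _ _
  have hHsub : HF ⊆ SF := Finset.filter_subset _ _
  have hSboth : ∀ e ∈ TF, ∀ x ∈ e, x ∈ SF := by
    intro e he x hx
    rw [hSFdef, Finset.mem_filter]
    refine ⟨Finset.mem_univ x, ?_⟩
    obtain ⟨hee, hT⟩ := (hTFmem e).mp he
    obtain ⟨i, hi, -⟩ := hlab x e hee hx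
    have hmem : i ∈ tF x := by
      rw [htFdef]
      simp only [Finset.mem_filter, Finset.mem_univ, true_and]
      have h2 : (⟨eLab x i, (hLab_mem x i).1⟩ : G.edgeSet) = ⟨e, hee⟩ := Subtype.ext hi
      rw [h2]; exact hT
    exact Finset.card_pos.mpr ⟨i, hmem⟩
  set A : ℕ := ∑ v ∈ LF, t v with hAdef
  set M : ℕ := ∑ v ∈ HF, t v with hMdef
  have hAM : A + M = 2 * TF.card := by
    have h1 : A + M = ∑ v ∈ SF, t v := by
      rw [hAdef, hMdef]
      exact Finset.sum_filter_add_sum_filter_not SF _ _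
    have h2 : ∑ v ∈ SF, t v = ∑ v, t v := by
      apply Finset.sum_subset (Finset.subset_univ SF)
      intro x _ hxS
      rw [hSFdef] at hxS
      simp only [Finset.mem_filter, Finset.mem_univ, true_and, not_lt, Nat.le_zero] at hxS
      exact hxS
    rw [h1, h2, hsum]
  have hScard : SF.card ≤ 2 * TF.card := by
    calc SF.card = ∑ _v ∈ SF, 1 := Finset.card_eq_sum_ones SF
      _ ≤ ∑ v ∈ SF, t v := Finset.sum_le_sum (fun v hv => by
          rw [hSFdef] at hv
          simp only [Finset.mem_filter, Finset.mem_univ, true_and] at hv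
          omega)
      _ ≤ ∑ v, t v := Finset.sum_le_sum_of_subset (Finset.subset_univ SF)
      _ = 2 * TF.card := hsum
  -- handshake and size bounds
  have hD0 : 0 < D := by
    obtain ⟨⟨e, he⟩, -⟩ := hTne
    obtain ⟨i, -, -⟩ := hlab e.out.1 e he (Sym2.out_fst_mem e)
    exact i.pos
  have hEcard : (D : ℝ) * n = 2 * (Nat.card G.edgeSet : ℝ) := by
    have h1 : ∑ v, G.degree v = 2 * G.edgeFinset.card := G.sum_degrees_eq_twice_card_edges
    have h2 : ∑ v, G.degree v = n * D := by
      rw [Finset.sum_congr rfl fun v _ => hdeg v, Finset.sum_const, smul_eq_mul,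
        Finset.card_univ]
    have h3 : Nat.card G.edgeSet = G.edgeFinset.card := by
      rw [Nat.card_coe_set_eq, Set.ncard_eq_toFinset_card']
      congr 1
    rw [h3]
    have : n * D = 2 * G.edgeFinset.card := h2 ▸ h1
    exact_mod_cast by push_cast [← this]; ring
  have hD' : (0:ℝ) < D := by exact_mod_cast hD0
  have hTn : (2 : ℝ) * T.ncard ≤ ε * n := by
    have key : 2 * ((ε / (D:ℝ)) * (Nat.card G.edgeSet : ℝ)) = ε * n := by
      rw [show 2 * ((ε / (D:ℝ)) * (Nat.card G.edgeSet:ℝ))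
          = (ε / D) * (2 * (Nat.card G.edgeSet:ℝ)) by ring, ← hEcard]
      field_simp
    linarith [hTcard]
  have hSFn : (SF.card : ℝ) ≤ ε * n := by
    have h1 : (SF.card : ℝ) ≤ 2 * T.ncard := by
      rw [← hTFcard]; exact_mod_cast hScard
    linarith
  -- edges inside finsets
  have heIn : ∀ W : Finset V,
      (eInside G (↑W : Set V) : ℕ) = (G.edgeFinset.filter (fun e => ∀ x ∈ e, x ∈ W)).card := by
    intro W
    have hset : {e ∈ G.edgeSet | ∀ v ∈ e, v ∈ (↑W : Set V)} =
        ↑(G.edgeFinset.filter (fun e => ∀ x ∈ e, x ∈ W)) := by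
      ext e
      simp [SimpleGraph.mem_edgeFinset]
    show ({e ∈ G.edgeSet | ∀ v ∈ e, v ∈ (↑W : Set V)}).ncard = _
    rw [hset, Set.ncard_coe_finset]
  have hGF : ∀ W : Finset V, (W.card : ℝ) ≤ ε * n →
      2 * ((G.edgeFinset.filter (fun e => ∀ x ∈ e, x ∈ W)).card : ℝ) ≤ γ * W.card := by
    intro W hW
    have := hG (↑W) (by rwa [Set.ncard_coe_finset])
    rwa [heIn W, Set.ncard_coe_finset] at this
  -- heavy mass bounds
  have hsplit : ∀ e : Sym2 V, (LF.filter (fun v => v ∈ e)).card + (HF.filter (fun v => v ∈ e)).card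
      = (SF.filter (fun v => v ∈ e)).card := by
    intro e
    have h1 : LF.filter (fun v => v ∈ e)
        = (SF.filter (fun v => v ∈ e)).filter (fun v => (t v : ℝ) ≤ 2 * γ) := by
      ext x
      simp only [hLFdef, Finset.mem_filter]
      tauto
    have h2 : HF.filter (fun v => v ∈ e)
        = (SF.filter (fun v => v ∈ e)).filter (fun v => ¬ (t v : ℝ) ≤ 2 * γ) := by
      ext x
      simp only [hHFdef, Finset.mem_filter]
      tauto
    rw [h1, h2]
    exact Finset.card_filter_add_card_filter_not _
  have hSe2 : ∀ e ∈ TF, (SF.filter (fun v => v ∈ e)).card = 2 := by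
    intro e he
    have : SF.filter (fun v => v ∈ e) = Finset.univ.filter (fun v => v ∈ e) := by
      ext x
      simp only [Finset.mem_filter, Finset.mem_univ, true_and]
      exact ⟨fun h => h.2, fun h => ⟨hSboth e he x h, h⟩⟩
    rw [this]
    exact two_endpoints G e (hTFedge e he)
  have hM1 : (M : ℝ) ≤ γ * HF.card + A := by
    have hMh : M = ∑ e ∈ TF, (HF.filter (fun v => v ∈ e)).card := by
      rw [hMdef, Finset.sum_congr rfl (fun v _ => htv v)]
      exact double_count TF HF
    have hAL : A = ∑ e ∈ TF, (LF.filter (fun v => v ∈ e)).card := by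
      rw [hAdef, Finset.sum_congr rfl (fun v _ => htv v)]
      exact double_count TF LF
    have hpt : ∀ e ∈ TF, (HF.filter (fun v => v ∈ e)).card ≤
        (if ∀ x ∈ e, x ∈ HF then 2 else 0) + (LF.filter (fun v => v ∈ e)).card := by
      intro e he
      by_cases hc : ∀ x ∈ e, x ∈ HF
      · rw [if_pos hc]
        have h1 := hsplit e
        have h2 := hSe2 e he
        omega
      · rw [if_neg hc]
        push_neg at hc
        obtain ⟨x, hxe, hxH⟩ := hc
        have hxS : x ∈ SF := hSboth e he x hxe
        have hxL : x ∈ LF := by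
          rw [hLFdef, Finset.mem_filter]
          refine ⟨hxS, ?_⟩
          by_contra hnot
          exact hxH (by rw [hHFdef, Finset.mem_filter]; exact ⟨hxS, hnot⟩)
        have h1L : 1 ≤ (LF.filter (fun v => v ∈ e)).card :=
          Finset.card_pos.mpr ⟨x, Finset.mem_filter.mpr ⟨hxL, hxe⟩⟩
        have h1 := hsplit e
        have h2 := hSe2 e he
        omega
    have hMle : M ≤ 2 * (TF.filter (fun e => ∀ x ∈ e, x ∈ HF)).card + A := by
      calc M = ∑ e ∈ TF, (HF.filter (fun v => v ∈ e)).card := hMh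
        _ ≤ ∑ e ∈ TF, ((if ∀ x ∈ e, x ∈ HF then 2 else 0)
            + (LF.filter (fun v => v ∈ e)).card) := Finset.sum_le_sum hpt
        _ = (∑ e ∈ TF, (if ∀ x ∈ e, x ∈ HF then 2 else 0)) + A := by
            rw [Finset.sum_add_distrib, hAL]
        _ = 2 * (TF.filter (fun e => ∀ x ∈ e, x ∈ HF)).card + A := by
            rw [← Finset.sum_filter, Finset.sum_const, smul_eq_mul, mul_comm]
    have hsubhh : (TF.filter (fun e => ∀ x ∈ e, x ∈ HF))
        ⊆ G.edgeFinset.filter (fun e => ∀ x ∈ e, x ∈ HF) := by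
      intro e he
      rw [Finset.mem_filter] at he ⊢
      exact ⟨(G.mem_edgeFinset).mpr (hTFedge e he.1), he.2⟩
    have hHFn : (HF.card : ℝ) ≤ ε * n := by
      have : (HF.card : ℝ) ≤ SF.card := by exact_mod_cast Finset.card_le_card hHsub
      linarith
    have hg := hGF HF hHFn
    have hc2 : ((TF.filter (fun e => ∀ x ∈ e, x ∈ HF)).card : ℝ)
        ≤ ((G.edgeFinset.filter (fun e => ∀ x ∈ e, x ∈ HF)).card : ℝ) := by
      exact_mod_cast Finset.card_le_card hsubhh
    have hMle' : (M : ℝ) ≤ 2 * ((TF.filter (fun e => ∀ x ∈ e, x ∈ HF)).card : ℝ) + A := by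
      exact_mod_cast hMle
    linarith
  have hM2 : 2 * γ * (HF.card : ℝ) ≤ M := by
    have hper : ∀ v ∈ HF, 2 * γ ≤ (t v : ℝ) := by
      intro v hv
      rw [hHFdef, Finset.mem_filter] at hv
      exact le_of_lt (lt_of_not_ge hv.2)
    calc 2 * γ * (HF.card : ℝ) = ∑ _v ∈ HF, 2 * γ := by
          rw [Finset.sum_const, nsmul_eq_mul]; ring
      _ ≤ ∑ v ∈ HF, (t v : ℝ) := Finset.sum_le_sum hper
      _ = (M : ℝ) := by rw [hMdef]; push_cast; rfl
  have hALc : (A : ℝ) ≤ 2 * γ * LF.card := by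
    have hper : ∀ v ∈ LF, (t v : ℝ) ≤ 2 * γ := by
      intro v hv
      rw [hLFdef, Finset.mem_filter] at hv
      exact hv.2
    calc (A : ℝ) = ∑ v ∈ LF, (t v : ℝ) := by rw [hAdef]; push_cast; rfl
      _ ≤ ∑ _v ∈ LF, 2 * γ := Finset.sum_le_sum hper
      _ = 2 * γ * LF.card := by rw [Finset.sum_const, nsmul_eq_mul]; ring
  -- profile lower bounds
  have hppos : 0 ≤ p := by
    rw [hp]
    apply Real.sInf_nonneg
    rintro r ⟨S, -, -, rfl⟩
    positivity
  have hbdd : ∀ τ : ℝ, BddBelow {r | ∃ S : Set (Fin D), S.Nonempty ∧ (S.ncard : ℝ) ≤ τ ∧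
      r = ((uniqueNbrs H S).ncard : ℝ) / (S.ncard : ℝ)} := by
    intro τ
    refine ⟨0, ?_⟩
    rintro r ⟨S, -, -, rfl⟩
    positivity
  have hUv : ∀ v ∈ LF,
      (6 * γ + p * (t v : ℝ) / 2) ≤ ((uniqueNbrs H (↑(tF v) : Set (Fin D))).ncard : ℝ) := by
    intro v hv
    rw [hLFdef, Finset.mem_filter] at hv
    obtain ⟨hvS, hvle⟩ := hv
    rw [hSFdef, Finset.mem_filter] at hvS
    have ht1 : 1 ≤ t v := hvS.2
    have htpos : (0:ℝ) < (t v : ℝ) := by exact_mod_cast hvS.2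
    have ht1' : (1:ℝ) ≤ (t v : ℝ) := by exact_mod_cast ht1
    set Sv : Set (Fin D) := (↑(tF v) : Set (Fin D)) with hSv
    have hSvcard : (Sv.ncard : ℝ) = (t v : ℝ) := by
      rw [hSv, Set.ncard_coe_finset]
    have hSvne : Sv.Nonempty := by
      rw [hSv]
      exact Finset.coe_nonempty.mpr (Finset.card_pos.mp hvS.2)
    set U : ℝ := ((uniqueNbrs H Sv).ncard : ℝ) with hU
    have hmem1 : U / (t v : ℝ) ∈ {r | ∃ S : Set (Fin D), S.Nonempty ∧ (S.ncard : ℝ) ≤ (t v : ℝ) ∧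
        r = ((uniqueNbrs H S).ncard : ℝ) / (S.ncard : ℝ)} :=
      ⟨Sv, hSvne, le_of_eq hSvcard, by rw [hSvcard]⟩
    have hmem2 : U / (t v : ℝ) ∈ {r | ∃ S : Set (Fin D), S.Nonempty ∧ (S.ncard : ℝ) ≤ 2 * γ ∧
        r = ((uniqueNbrs H S).ncard : ℝ) / (S.ncard : ℝ)} :=
      ⟨Sv, hSvne, hSvcard ▸ hvle, by rw [hSvcard]⟩
    have h1 : profile H (t v : ℝ) ≤ U / (t v : ℝ) := csInf_le (hbdd _) hmem1
    have h2 : p ≤ U / (t v : ℝ) := by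
      rw [hp]
      exact csInf_le (hbdd _) hmem2
    have h3 : 12 * γ / (t v : ℝ) ≤ profile H (t v : ℝ) := hH (t v : ℝ) ht1' hvle
    have h12 : 12 * γ ≤ U := by
      have h4 : 12 * γ / (t v : ℝ) ≤ U / (t v : ℝ) := le_trans h3 h1
      calc 12 * γ = (12 * γ / (t v : ℝ)) * (t v : ℝ) := by field_simp
        _ ≤ (U / (t v : ℝ)) * (t v : ℝ) := mul_le_mul_of_nonneg_right h4 (le_of_lt htpos)
        _ = U := by field_simp
    have hpt : p * (t v : ℝ) ≤ U := (le_div_iff₀ htpos).mp h2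
    linarith
  -- spoiled candidates
  set sp : V → Fin D → Prop := fun v j => ∃ (w : V) (i k : Fin D), w ≠ v ∧ H.Adj i k ∧
      eLab v j = eLab w i ∧ (⟨eLab w k, (hLab_mem w k).1⟩ : G.edgeSet) ∈ T with hspdef
  set UvF : V → Finset (Fin D) := fun v => (uniqueNbrs H (↑(tF v) : Set (Fin D))).toFinset
    with hUvFdef
  set Good : V → Finset (Fin D) := fun v => (UvF v).filter (fun j => ¬ sp v j) with hGooddef
  set Spo : V → Finset (Fin D) := fun v => (UvF v).filter (fun j => sp v j) with hSpodef
  have hGS : ∀ v, (Good v).card + (Spo v).card = (UvF v).card := by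
    intro v
    rw [hGooddef, hSpodef, add_comm]
    exact Finset.card_filter_add_card_filter_not _
  have hclaimA : ∀ v, ∀ j ∈ Good v,
      (⟨eLab v j, (hLab_mem v j).1⟩ : G.edgeSet) ∈ uniqueNbrs Z T := by
    intro v j hj
    rw [hGooddef, Finset.mem_filter] at hj
    obtain ⟨hjU, hjns⟩ := hj
    rw [hUvFdef, Set.mem_toFinset] at hjU
    obtain ⟨u, ⟨huT, hadj⟩, huniq⟩ := hjU
    have huT' : (⟨eLab v u, (hLab_mem v u).1⟩ : G.edgeSet) ∈ T := by
      have h0 : u ∈ tF v := Finset.mem_coe.mp huT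
      rw [htFdef] at h0
      simpa using h0
    simp only [uniqueNbrs, Set.mem_setOf_eq]
    refine ⟨⟨eLab v u, (hLab_mem v u).1⟩, ⟨huT', ?_⟩, ?_⟩
    · rw [hZ]
      exact ⟨v, j, u, hadj, rfl, rfl⟩
    · rintro e ⟨heT, hadje⟩
      rw [hZ] at hadje
      obtain ⟨w, i, k, hik, hfw, hew⟩ := hadje
      by_cases hwv : w = v
      · subst hwv
        have hij : i = j := hLab_inj w hfw.symm
        subst hij
        have hkT : k ∈ (↑(tF w) : Set (Fin D)) := by
          rw [Finset.mem_coe, htFdef]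
          simp only [Finset.mem_filter, Finset.mem_univ, true_and]
          have h2 : (⟨eLab w k, (hLab_mem w k).1⟩ : G.edgeSet) = e := Subtype.ext hew.symm
          rw [h2]
          exact heT
        have hku : k = u := huniq k ⟨hkT, hik⟩
        apply Subtype.ext
        rw [hew, hku]
      · exfalso
        apply hjns
        rw [hspdef]
        refine ⟨w, i, k, hwv, hik, hfw, ?_⟩
        have h2 : (⟨eLab w k, (hLab_mem w k).1⟩ : G.edgeSet) = e := Subtype.ext hew.symm
        rw [h2]
        exact heT
  have hSpoB : ∑ v ∈ LF, (Spo v).card ≤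
      2 * (G.edgeFinset.filter (fun e => ∀ x ∈ e, x ∈ SF)).card := by
    set EinS := G.edgeFinset.filter (fun e => ∀ x ∈ e, x ∈ SF) with hEinS
    have hper : ∀ v ∈ LF, (Spo v).card ≤ (EinS.filter (fun e => v ∈ e)).card := by
      intro v hv
      apply Finset.card_le_card_of_injOn (fun j => eLab v j)
      · intro j hj
        rw [Finset.mem_coe, hSpodef, Finset.mem_filter] at hj
        obtain ⟨hjU, hjsp⟩ := hj
        rw [hspdef] at hjsp
        obtain ⟨w, i, k, hwv, hik, hvw, hkT⟩ := hjsp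
        rw [Finset.mem_coe, Finset.mem_filter, hEinS, Finset.mem_filter]
        refine ⟨⟨(G.mem_edgeFinset).mpr (hLab_mem v j).1, ?_⟩, (hLab_mem v j).2⟩
        intro x hx
        have hvin : v ∈ eLab v j := (hLab_mem v j).2
        have hwin : w ∈ eLab v j := by rw [hvw]; exact (hLab_mem w i).2
        rcases edge_eq_pair _ v w hvin hwin (Ne.symm hwv) x hx with rfl | rfl
        · exact hLsub hv
        · rw [hSFdef, Finset.mem_filter]
          refine ⟨Finset.mem_univ _, Finset.card_pos.mpr ⟨k, ?_⟩⟩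
          rw [htFdef]
          simp only [Finset.mem_filter, Finset.mem_univ, true_and]
          exact hkT
      · intro a _ b _ hab
        exact hLab_inj v hab
    have hEinSedge : ∀ e ∈ EinS, e ∈ G.edgeSet := by
      intro e he
      rw [hEinS, Finset.mem_filter, SimpleGraph.mem_edgeFinset] at he
      exact he.1
    calc ∑ v ∈ LF, (Spo v).card
        ≤ ∑ v ∈ LF, (EinS.filter (fun e => v ∈ e)).card := Finset.sum_le_sum hper
      _ ≤ ∑ v, (EinS.filter (fun e => v ∈ e)).card :=
          Finset.sum_le_sum_of_subset (Finset.subset_univ LF)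
      _ = ∑ e ∈ EinS, (Finset.univ.filter (fun v => v ∈ e)).card := double_count EinS Finset.univ
      _ = ∑ _e ∈ EinS, 2 := Finset.sum_congr rfl (fun e he => two_endpoints G e (hEinSedge e he))
      _ = 2 * EinS.card := by rw [Finset.sum_const, smul_eq_mul, mul_comm]
  have hUNge : ∑ v ∈ LF, (Good v).card ≤ (uniqueNbrs Z T).ncard := by
    set GoodE : V → Finset G.edgeSet :=
      fun v => (Good v).image (fun j => ⟨eLab v j, (hLab_mem v j).1⟩) with hGEdef
    have hcardE : ∀ v, (GoodE v).card = (Good v).card := by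
      intro v
      rw [hGEdef]
      exact Finset.card_image_of_injOn
        (fun a _ b _ h => hLab_inj v (congrArg Subtype.val h))
    have hdisj : ∀ v ∈ LF, ∀ w ∈ LF, v ≠ w → Disjoint (GoodE v) (GoodE w) := by
      intro v _ w _ hvw
      rw [Finset.disjoint_left]
      intro f hfv hfw
      rw [hGEdef] at hfv hfw
      obtain ⟨a, ha, hfa⟩ := Finset.mem_image.mp hfv
      obtain ⟨b, hb, hfb⟩ := Finset.mem_image.mp hfw
      rw [hGooddef, Finset.mem_filter] at ha hb
      obtain ⟨haU, -⟩ := ha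
      rw [hUvFdef, Set.mem_toFinset] at haU
      obtain ⟨u, ⟨huT, hadj⟩, -⟩ := haU
      apply hb.2
      rw [hspdef]
      refine ⟨v, a, u, hvw, hadj, ?_, ?_⟩
      · exact (congrArg Subtype.val (hfa.trans hfb.symm)).symm
      · have h0 : u ∈ tF v := Finset.mem_coe.mp huT
        rw [htFdef] at h0
        simpa using h0
    have hsub : (LF.biUnion GoodE) ⊆ (uniqueNbrs Z T).toFinset := by
      intro f hf
      obtain ⟨v, _, hfv⟩ := Finset.mem_biUnion.mp hf
      rw [hGEdef] at hfv
      obtain ⟨j, hj, rfl⟩ := Finset.mem_image.mp hfv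
      rw [Set.mem_toFinset]
      exact hclaimA v j hj
    calc ∑ v ∈ LF, (Good v).card = ∑ v ∈ LF, (GoodE v).card :=
        (Finset.sum_congr rfl fun v _ => (hcardE v)).symm
      _ = (LF.biUnion GoodE).card := (Finset.card_biUnion hdisj).symm
      _ ≤ (uniqueNbrs Z T).toFinset.card := Finset.card_le_card hsub
      _ = (uniqueNbrs Z T).ncard := (Set.ncard_eq_toFinset_card' _).symm
  -- final arithmetic
  have hes : 2 * ((G.edgeFinset.filter (fun e => ∀ x ∈ e, x ∈ SF)).card : ℝ)
      ≤ γ * (LF.card + HF.card) := by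
    have := hGF SF hSFn
    rw [← hLHS] at this
    exact_mod_cast this
  have hUN : 6 * γ * LF.card + p * A / 2
      - 2 * ((G.edgeFinset.filter (fun e => ∀ x ∈ e, x ∈ SF)).card : ℝ)
      ≤ ((uniqueNbrs Z T).ncard : ℝ) := by
    have hGSsum : ∑ v ∈ LF, (Good v).card + ∑ v ∈ LF, (Spo v).card
        = ∑ v ∈ LF, (UvF v).card := by
      rw [← Finset.sum_add_distrib]
      exact Finset.sum_congr rfl fun v _ => hGS v
    have hstep : ∀ v ∈ LF, 6 * γ + p * (t v : ℝ) / 2 ≤ ((UvF v).card : ℝ) := by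
      intro v hv
      have h1 := hUv v hv
      have h2 : (UvF v).card = (uniqueNbrs H (↑(tF v) : Set (Fin D))).ncard := by
        rw [hUvFdef]
        exact (Set.ncard_eq_toFinset_card' _).symm
      rw [h2]
      exact h1
    have hsA : ∑ v ∈ LF, (t v : ℝ) = (A : ℝ) := by rw [hAdef]; push_cast; rfl
    have hUvsum : 6 * γ * (LF.card : ℝ) + p * (A : ℝ) / 2
        ≤ ∑ v ∈ LF, ((UvF v).card : ℝ) := by
      calc 6 * γ * (LF.card : ℝ) + p * (A : ℝ) / 2
          = (∑ _v ∈ LF, 6 * γ) + p * (∑ v ∈ LF, (t v : ℝ)) / 2 := by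
            rw [hsA, Finset.sum_const, nsmul_eq_mul]; ring
        _ = ∑ v ∈ LF, (6 * γ + p * (t v : ℝ) / 2) := by
            rw [Finset.sum_add_distrib, Finset.mul_sum, Finset.sum_div]
        _ ≤ ∑ v ∈ LF, ((UvF v).card : ℝ) := Finset.sum_le_sum hstep
    have hcast : ∑ v ∈ LF, ((UvF v).card : ℝ)
        = ((∑ v ∈ LF, (Good v).card : ℕ) : ℝ) + ((∑ v ∈ LF, (Spo v).card : ℕ) : ℝ) := by
      push_cast
      exact_mod_cast hGSsum.symm
    have hgood : ((∑ v ∈ LF, (Good v).card : ℕ) : ℝ) ≤ ((uniqueNbrs Z T).ncard : ℝ) := by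
      exact_mod_cast hUNge
    have hspo : ((∑ v ∈ LF, (Spo v).card : ℕ) : ℝ)
        ≤ 2 * ((G.edgeFinset.filter (fun e => ∀ x ∈ e, x ∈ SF)).card : ℝ) := by
      exact_mod_cast hSpoB
    linarith
  have hγ0 : 0 < γ := lt_of_lt_of_le (by norm_num) hγ
  have hhA : γ * (HF.card : ℝ) ≤ A := by linarith
  have hA23 : 2 * (T.ncard : ℝ) ≤ 3 * A := by
    have h1 : (A : ℝ) + M = 2 * T.ncard := by
      rw [← hTFcard]; exact_mod_cast hAM
    linarith
  have hpa : p * (2 * (T.ncard : ℝ)) ≤ p * (3 * (A : ℝ)) :=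
    mul_le_mul_of_nonneg_left hA23 hppos
  have hlcA : (A : ℝ) / 2 ≤ γ * LF.card := by
    nlinarith
  nlinarith [hUN, hes, (Nat.cast_nonneg A : (0:ℝ) ≤ A), (Nat.cast_nonneg M : (0:ℝ) ≤ M)]



end UNE
end
end

section
/- Let γ > 0 and let F be a finite graph such that 2e(S) ≤ γ|S| for every S ⊆ V(F). Let F_ℓ be the set of vertices of F of degree at most 2γ. Then 2e(F) ≤ 3·Σ_{v ∈ F_ℓ} deg(v), where e(F) is the total number of edges of F. -/
open scoped Classical

noncomputable section

namespace UNE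

section Aux

variable {V : Type} [Fintype V]

lemma deg_eq_degree (G : SimpleGraph V) (v : V) : deg G v = G.degree v := by
  have h : {u | G.Adj v u} = ↑(G.neighborFinset v) := by ext u; simp
  rw [deg, h, Set.ncard_coe_finset, SimpleGraph.degree]

lemma eInside_coe (G : SimpleGraph V) (t : Finset V) :
    eInside G ↑t = (G.edgeFinset.filter (fun e => ∀ v ∈ e, v ∈ t)).card := by
  rw [eInside]
  have h : {e ∈ G.edgeSet | ∀ v ∈ e, v ∈ (↑t : Set V)}
      = ↑(G.edgeFinset.filter (fun e => ∀ v ∈ e, v ∈ t)) := by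
    ext e; simp [Set.mem_setOf_eq]
  rw [h, Set.ncard_coe_finset]

lemma two_mul_eIn (G : SimpleGraph V) (t : Finset V) :
    2 * (G.edgeFinset.filter (fun e => ∀ v ∈ e, v ∈ t)).card
      = ∑ v ∈ t, (t.filter (G.Adj v)).card := by
  classical
  set Et := G.edgeFinset.filter (fun e => ∀ v ∈ e, v ∈ t) with hEt
  set P := (t ×ˢ t).filter (fun p => G.Adj p.1 p.2) with hP
  have h1 : ∑ v ∈ t, (t.filter (G.Adj v)).card = P.card := by
    rw [hP, Finset.card_filter, Finset.sum_product]
    exact Finset.sum_congr rfl fun v _ => Finset.card_filter (fun u => G.Adj v u) t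
  have hmap : ∀ p ∈ P, s(p.1, p.2) ∈ Et := by
    intro p hp
    rw [hP, Finset.mem_filter, Finset.mem_product] at hp
    rw [hEt, Finset.mem_filter]
    refine ⟨SimpleGraph.mem_edgeFinset.2 hp.2, ?_⟩
    intro v hv
    rw [Sym2.mem_iff] at hv
    rcases hv with rfl | rfl
    · exact hp.1.1
    · exact hp.1.2
  have h2 : P.card = ∑ e ∈ Et, (P.filter (fun p => s(p.1, p.2) = e)).card :=
    Finset.card_eq_sum_card_fiberwise hmap
  have h3 : ∀ e ∈ Et, (P.filter (fun p => s(p.1, p.2) = e)).card = 2 := by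
    intro e he
    induction e with
    | _ a b =>
      rw [hEt, Finset.mem_filter] at he
      have hadj : G.Adj a b := SimpleGraph.mem_edgeFinset.1 he.1
      have hane : a ≠ b := hadj.ne
      have ha : a ∈ t := he.2 a (Sym2.mem_mk_left a b)
      have hb : b ∈ t := he.2 b (Sym2.mem_mk_right a b)
      have hfib : P.filter (fun p => s(p.1, p.2) = s(a, b)) = {(a, b), (b, a)} := by
        ext p
        rw [Finset.mem_filter, hP, Finset.mem_filter, Finset.mem_product]
        constructor
        · rintro ⟨-, hpe⟩
          rw [Sym2.eq_iff] at hpe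
          rcases hpe with ⟨h1, h2⟩ | ⟨h1, h2⟩
          · exact Finset.mem_insert.2 (Or.inl (Prod.ext h1 h2))
          · rw [Finset.mem_insert, Finset.mem_singleton]
            exact Or.inr (Prod.ext h1 h2)
        · intro hp
          rcases Finset.mem_insert.1 hp with rfl | hp
          · exact ⟨⟨⟨ha, hb⟩, hadj⟩, rfl⟩
          · rw [Finset.mem_singleton] at hp; subst hp
            exact ⟨⟨⟨hb, ha⟩, hadj.symm⟩, Sym2.eq_swap⟩
      rw [hfib, Finset.card_insert_of_notMem, Finset.card_singleton]
      simp [Prod.ext_iff, hane]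
  rw [h1, h2, Finset.sum_congr rfl h3, Finset.sum_const, smul_eq_mul, mul_comm]

end Aux

/-- Lemma `lem:most-low`: if every vertex subset of `F` spans at most `γ|S|/2` edges,
then most edges are incident to vertices of degree at most `2γ`. -/
theorem edges_incident_to_low_degree {V : Type} [Fintype V] (F : SimpleGraph V)
    (γ : ℝ) (hγ : 0 < γ)
    (hF : ∀ S : Set V, 2 * (eInside F S : ℝ) ≤ γ * (S.ncard : ℝ)) :
    2 * (F.edgeSet.ncard : ℝ) ≤
      3 * ∑ v ∈ Finset.univ.filter (fun v => (deg F v : ℝ) ≤ 2 * γ), (deg F v : ℝ) := by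
  classical
  set Lset := Finset.univ.filter (fun v => (deg F v : ℝ) ≤ 2 * γ) with hLdef
  set Hset := Finset.univ.filter (fun v : V => ¬ (deg F v : ℝ) ≤ 2 * γ) with hHdef
  have hdegsum : ∀ s : Finset V, ∑ v ∈ s, (deg F v : ℝ) = ∑ v ∈ s, (F.degree v : ℝ) :=
    fun s => Finset.sum_congr rfl fun v _ => by rw [deg_eq_degree]
  -- handshake
  have hhand : 2 * (F.edgeSet.ncard : ℝ)
      = ∑ v ∈ Hset, (F.degree v : ℝ) + ∑ v ∈ Lset, (F.degree v : ℝ) := by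
    have h1 : F.edgeSet.ncard = F.edgeFinset.card := by
      rw [← SimpleGraph.coe_edgeFinset, Set.ncard_coe_finset]
    have h2 : ∑ v, F.degree v = 2 * F.edgeFinset.card :=
      SimpleGraph.sum_degrees_eq_twice_card_edges F
    have h3 : ∑ v ∈ Lset, (F.degree v : ℝ) + ∑ v ∈ Hset, (F.degree v : ℝ)
        = ∑ v, (F.degree v : ℝ) := by
      rw [hLdef, hHdef]
      exact Finset.sum_filter_add_sum_filter_not _ _ _
    have h2' : 2 * (F.edgeFinset.card : ℝ) = ∑ v, (F.degree v : ℝ) := by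
      exact_mod_cast congrArg (Nat.cast : ℕ → ℝ) h2.symm
    rw [h1]
    linarith [h3, h2']
  -- degree splitting
  have hsplit : ∀ v : V, F.degree v
      = (Lset.filter (F.Adj v)).card + (Hset.filter (F.Adj v)).card := by
    intro v
    have h0 : F.neighborFinset v = Finset.univ.filter (F.Adj v) := by ext u; simp
    have h1 := Finset.card_filter_add_card_filter_not
      (s := Finset.univ.filter (F.Adj v)) (p := fun u => (deg F u : ℝ) ≤ 2 * γ)
    rw [SimpleGraph.degree, h0, ← h1, hLdef, hHdef]
    congr 1
    · exact congrArg Finset.card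
        (Finset.filter_comm (F.Adj v) (fun u => (deg F u : ℝ) ≤ 2 * γ) Finset.univ)
    · exact congrArg Finset.card
        (Finset.filter_comm (F.Adj v) (fun u => ¬ (deg F u : ℝ) ≤ 2 * γ) Finset.univ)
  -- edges inside Hset
  have hEH : ∑ v ∈ Hset, (Hset.filter (F.Adj v)).card = 2 * eInside F ↑Hset := by
    rw [eInside_coe, two_mul_eIn]
  -- cross edges
  have hcross : ∑ v ∈ Hset, (Lset.filter (F.Adj v)).card
      = ∑ u ∈ Lset, (Hset.filter (F.Adj u)).card := by
    have h1 : ∀ (s t : Finset V), ∑ v ∈ s, (t.filter (F.Adj v)).card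
        = ∑ v ∈ s, ∑ u ∈ t, (if F.Adj v u then 1 else 0) :=
      fun s t => Finset.sum_congr rfl fun v _ => Finset.card_filter (fun u => F.Adj v u) t
    rw [h1, h1, Finset.sum_comm]
    refine Finset.sum_congr rfl fun u _ => Finset.sum_congr rfl fun v _ => ?_
    simp [SimpleGraph.adj_comm]
  have hle : ∀ u : V, (Hset.filter (F.Adj u)).card ≤ F.degree u := by
    intro u
    have h0 : F.neighborFinset u = Finset.univ.filter (F.Adj u) := by ext w; simp
    rw [SimpleGraph.degree, h0]
    exact Finset.card_le_card (by
      intro w hw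
      rw [Finset.mem_filter] at hw ⊢
      exact ⟨Finset.mem_univ w, hw.2⟩)
  -- key inequality: a ≤ 2h + b  (nat level)
  have hkey : ∑ v ∈ Hset, F.degree v
      ≤ 2 * eInside F ↑Hset + ∑ v ∈ Lset, F.degree v := by
    calc ∑ v ∈ Hset, F.degree v
        = ∑ v ∈ Hset, (Lset.filter (F.Adj v)).card
          + ∑ v ∈ Hset, (Hset.filter (F.Adj v)).card := by
          rw [← Finset.sum_add_distrib]
          exact Finset.sum_congr rfl fun v _ => hsplit v
      _ = ∑ u ∈ Lset, (Hset.filter (F.Adj u)).card + 2 * eInside F ↑Hset := by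
          rw [hcross, hEH]
      _ ≤ ∑ u ∈ Lset, F.degree u + 2 * eInside F ↑Hset := by
          gcongr with u hu
          exact hle u
      _ = 2 * eInside F ↑Hset + ∑ v ∈ Lset, F.degree v := by ring
  have hkeyR : ∑ v ∈ Hset, (F.degree v : ℝ)
      ≤ 2 * (eInside F ↑Hset : ℝ) + ∑ v ∈ Lset, (F.degree v : ℝ) := by
    exact_mod_cast hkey
  -- sparsity on Hset
  have hsp : 2 * (eInside F ↑Hset : ℝ) ≤ γ * (Hset.card : ℝ) := by
    have := hF ↑Hset
    rwa [Set.ncard_coe_finset] at this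
  -- high degrees
  have hhi : 2 * γ * (Hset.card : ℝ) ≤ ∑ v ∈ Hset, (F.degree v : ℝ) := by
    have h1 : ∀ v ∈ Hset, 2 * γ ≤ (F.degree v : ℝ) := by
      intro v hv
      rw [hHdef, Finset.mem_filter] at hv
      have := hv.2
      rw [deg_eq_degree] at this
      linarith [not_le.1 this]
    calc 2 * γ * (Hset.card : ℝ) = ∑ _v ∈ Hset, 2 * γ := by
          rw [Finset.sum_const, nsmul_eq_mul]; ring
      _ ≤ ∑ v ∈ Hset, (F.degree v : ℝ) := Finset.sum_le_sum h1
  rw [hdegsum]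
  linarith [hhand, hkeyR, hsp, hhi]

end UNE
end
end

section
/- Let G be a finite graph and let T be a tree extension of G, i.e. T is obtained from G by attaching to each vertex r of G a finite rooted tree T_r with root r, where the trees are pairwise disjoint, each tree meets V(G) only in its root, and T has no edges other than the edges of G and the edges of the trees. For x ∈ V(T), let depth(x) be the distance in T_x's tree from x to its root. Let t ∈ ℝ and f : V(G) → ℝ, and define the extension f_t : V(T) → ℝ by f_t(x) = f(r)·t^{depth(x)} when x lies in the tree T_r rooted at r. Then (H_T(t)·f_t)(x) = (H_G(t)·f)(x) for every x ∈ V(G), and (H_T(t)·f_t)(x) = 0 for every x ∈ V(T) \ V(G). -/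
open scoped Classical

noncomputable section

namespace UNE

/-- `T` (on vertex type `W`) is a tree extension of `G` (on `V`): it is obtained from `G`
by attaching to each vertex `r` of `G` a rooted tree with root `r`; `ι` embeds `V` into
`W`, `root x` is the root of the tree containing `x`, and `depth x` is the distance from
`x` to its root. -/
structure IsTreeExtension {V W : Type*} (G : SimpleGraph V) (T : SimpleGraph W)
    (ι : V → W) (root : W → V) (depth : W → ℕ) : Prop where
  inj : Function.Injective ι
  depth_base : ∀ v, depth (ι v) = 0
  root_base : ∀ v, root (ι v) = v
  adj_base : ∀ u v : V, T.Adj (ι u) (ι v) ↔ G.Adj u v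
  depth_pos : ∀ x : W, (∀ v, x ≠ ι v) → 0 < depth x
  adj_tree : ∀ x y : W, T.Adj x y → 0 < depth x →
    root y = root x ∧ (depth y + 1 = depth x ∨ depth x + 1 = depth y)
  parent_unique : ∀ x : W, 0 < depth x → ∃! y, T.Adj x y ∧ depth y + 1 = depth x

private lemma deg_cast {V : Type} [Fintype V] (G : SimpleGraph V) (x : V) :
    (deg G x : ℝ) = ∑ y, if G.Adj x y then (1 : ℝ) else 0 := by
  rw [Finset.sum_boole, deg, Set.ncard_eq_toFinset_card']
  congr 1
  simp [Set.toFinset_setOf]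

private lemma bh_mulVec {V : Type} [Fintype V] (G : SimpleGraph V) (t : ℝ)
    (g : V → ℝ) (x : V) :
    (betheHessian G t).mulVec g x =
      (∑ y, if G.Adj x y then (t ^ 2 * g x - t * g y) else 0) - t ^ 2 * g x + g x := by
  have h1 : (betheHessian G t).mulVec g x
      = t ^ 2 * (((deg G x : ℝ) - 1) * g x) - t * ((adjMat G).mulVec g x) + g x := by
    simp [betheHessian, Matrix.add_mulVec, Matrix.sub_mulVec, Matrix.smul_mulVec,
      Matrix.one_mulVec, degMat, ← Matrix.diagonal_one, ← Matrix.diagonal_sub,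
      Matrix.mulVec_diagonal, Pi.smul_apply, Pi.sub_apply]
    left; ring
  have h2 : (adjMat G).mulVec g x = ∑ y, if G.Adj x y then g y else 0 := by
    simp [adjMat, Matrix.mulVec, dotProduct, ite_mul]
  rw [h1, h2, deg_cast]
  have h3 : ∀ y, (if G.Adj x y then t ^ 2 * g x - t * g y else 0)
      = t ^ 2 * g x * (if G.Adj x y then (1:ℝ) else 0) - t * (if G.Adj x y then g y else 0) := by
    intro y; split <;> ring
  simp only [h3, Finset.sum_sub_distrib, ← Finset.mul_sum]
  ring

/-- Lemma `lem:H-TG`: for a tree extension `T` of `G` and the extension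
`f_t(x) = f(root x)·t^(depth x)` of `f : V(G) → ℝ`, the Bethe Hessian of `T` applied to
`f_t` agrees with the Bethe Hessian of `G` applied to `f` on `V(G)` and vanishes
elsewhere. -/
theorem bethe_hessian_tree_extension {V W : Type} [Fintype V] [Fintype W]
    (G : SimpleGraph V) (T : SimpleGraph W)
    (ι : V → W) (root : W → V) (depth : W → ℕ)
    (hext : IsTreeExtension G T ι root depth)
    (t : ℝ) (f : V → ℝ) :
    (∀ v : V,
      (betheHessian T t).mulVec (fun x => f (root x) * t ^ depth x) (ι v) =
        (betheHessian G t).mulVec f v) ∧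
    (∀ x : W, (∀ v, x ≠ ι v) →
      (betheHessian T t).mulVec (fun x => f (root x) * t ^ depth x) x = 0) := by
  obtain ⟨hinj, hdb, hrb, hab, hdp, hat, hpu⟩ := hext
  set g : W → ℝ := fun x => f (root x) * t ^ depth x with hgdef
  constructor
  · intro v
    rw [bh_mulVec, bh_mulVec]
    have hgx : g (ι v) = f v := by simp [hgdef, hdb, hrb]
    have hstep : (∑ y, if T.Adj (ι v) y then (t ^ 2 * g (ι v) - t * g y) else 0)
        = ∑ u, if G.Adj v u then (t ^ 2 * f v - t * f u) else 0 := by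
      have hvan : ∀ y ∈ Finset.univ, y ∉ Finset.univ.image ι →
          (if T.Adj (ι v) y then (t ^ 2 * g (ι v) - t * g y) else 0) = 0 := by
        intro y _ hy
        have hy' : ∀ u, y ≠ ι u := by
          intro u h
          exact hy (Finset.mem_image.2 ⟨u, Finset.mem_univ u, h.symm⟩)
        by_cases hadj : T.Adj (ι v) y
        · have hky : 0 < depth y := hdp y hy'
          obtain ⟨hr, hd⟩ := hat y (ι v) hadj.symm hky
          rcases hd with h | h
          · rw [hdb] at h
            have hgy : g y = f v * t := by
              simp [hgdef, ← hr, hrb, ← h]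
            simp only [hadj, if_true, hgx, hgy]
            ring
          · rw [hdb] at h; omega
        · simp [hadj]
      rw [← Finset.sum_subset (Finset.subset_univ (Finset.univ.image ι)) hvan,
        Finset.sum_image (fun a _ b _ h => hinj h)]
      refine Finset.sum_congr rfl fun u _ => ?_
      rw [hab, hgx]
      congr 1
      simp [hgdef, hdb, hrb]
    rw [hstep, hgx]
  · intro x hx
    rw [bh_mulVec]
    have hk : 0 < depth x := hdp x hx
    obtain ⟨p, ⟨hpadj, hpd⟩, hpun⟩ := hpu x hk
    have hrootp : root p = root x := (hat x p hpadj hk).1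
    have hsum : (∑ y, if T.Adj x y then (t ^ 2 * g x - t * g y) else 0)
        = t ^ 2 * g x - t * g p := by
      rw [Finset.sum_eq_single p]
      · simp [hpadj]
      · intro y _ hyp
        by_cases hadj : T.Adj x y
        · obtain ⟨hry, hdy⟩ := hat x y hadj hk
          have hdy' : depth x + 1 = depth y := by
            rcases hdy with h | h
            · exact absurd (hpun y ⟨hadj, h⟩) hyp
            · exact h
          simp only [hadj, if_true, hgdef, hry, ← hdy', pow_succ]
          ring
        · simp [hadj]
      · exact fun h => absurd (Finset.mem_univ p) h
    rw [hsum]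
    have hgx : g x = f (root x) * t ^ (depth p + 1) := by rw [hgdef]; simp [hpd]
    have hgp : g p = f (root x) * t ^ depth p := by simp [hgdef, hrootp]
    rw [hgx, hgp, pow_succ]
    ring

end UNE
end
end

section
/- Let T and G be finite graphs and let σ : V(T) → V(G) be a graph homomorphism (σ maps every edge of T to an edge of G) such that any two distinct edges of T sharing a vertex are mapped to distinct edges of G. For f : V(T) → ℝ define the folded function f̃ : V(G) → ℝ by f̃(v) = (Σ_{x ∈ σ^{-1}(v)} f(x)²)^{1/2}. Then ⟨f, A_T f⟩ ≤ ⟨f̃, A_G f̃⟩, where A_T, A_G are the adjacency matrices of T and G. -/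
open scoped Classical

noncomputable section

namespace UNE

lemma quad_form_eq {n : Type} [Fintype n] (H : SimpleGraph n) (g : n → ℝ) :
    dotProduct g ((adjMat H).mulVec g)
      = ∑ u : n, ∑ v : n, (if H.Adj u v then g u * g v else 0) := by
  classical
  simp only [dotProduct, Matrix.mulVec, adjMat, Matrix.of_apply, Finset.mul_sum]
  refine Finset.sum_congr rfl fun u _ => Finset.sum_congr rfl fun v _ => ?_
  split_ifs <;> ring

/-- **Folding a quadratic form** (Lemma `lem:folded-quadratic-form`): if `σ : T → G` is a
graph homomorphism mapping distinct edges sharing a vertex to distinct edges, then the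
adjacency quadratic form of `f` on `T` is at most that of the folded function
`f̃(v) = (Σ_{σ(x)=v} f(x)²)^{1/2}` on `G`. -/
theorem folded_quadratic_form {W V : Type} [Fintype W] [Fintype V]
    (T : SimpleGraph W) (G : SimpleGraph V) (σ : W → V)
    (hhom : ∀ x y : W, T.Adj x y → G.Adj (σ x) (σ y))
    (hedge : ∀ e₁ e₂ : Sym2 W, e₁ ∈ T.edgeSet → e₂ ∈ T.edgeSet → e₁ ≠ e₂ →
      (∃ x : W, x ∈ e₁ ∧ x ∈ e₂) → Sym2.map σ e₁ ≠ Sym2.map σ e₂)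
    (f : W → ℝ) :
    dotProduct f ((adjMat T).mulVec f) ≤
      dotProduct
        (fun v => Real.sqrt (∑ x ∈ Finset.univ.filter (fun x => σ x = v), f x ^ 2))
        ((adjMat G).mulVec
          (fun v => Real.sqrt (∑ x ∈ Finset.univ.filter (fun x => σ x = v), f x ^ 2))) := by
  classical
  set F : V → Finset W := fun v => Finset.univ.filter (fun x => σ x = v) with hF
  set ft : V → ℝ := fun v => Real.sqrt (∑ x ∈ F v, f x ^ 2) with hft
  show dotProduct f ((adjMat T).mulVec f) ≤ dotProduct ft ((adjMat G).mulVec ft)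
  rw [quad_form_eq T f, quad_form_eq G ft]
  have e2 : (∑ x : W, ∑ y : W, (if T.Adj x y then f x * f y else 0))
      = ∑ u : V, ∑ v : V, ∑ x ∈ F u, ∑ y ∈ F v, (if T.Adj x y then f x * f y else 0) := by
    rw [← Finset.sum_fiberwise Finset.univ σ
      (fun x => ∑ y : W, (if T.Adj x y then f x * f y else 0))]
    refine Finset.sum_congr rfl fun u _ => ?_
    calc (∑ x ∈ F u, ∑ y : W, (if T.Adj x y then f x * f y else 0))
        = ∑ x ∈ F u, ∑ v : V, ∑ y ∈ F v, (if T.Adj x y then f x * f y else 0) :=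
          Finset.sum_congr rfl fun x _ => (Finset.sum_fiberwise Finset.univ σ
            (fun y => (if T.Adj x y then f x * f y else 0))).symm
      _ = _ := Finset.sum_comm
  rw [e2]
  refine Finset.sum_le_sum fun u _ => Finset.sum_le_sum fun v _ => ?_
  by_cases h : G.Adj u v
  · rw [if_pos h]
    set P := (F u ×ˢ F v).filter (fun p : W × W => T.Adj p.1 p.2) with hP
    have hPmem : ∀ p ∈ P, σ p.1 = u ∧ σ p.2 = v ∧ T.Adj p.1 p.2 := by
      intro p hp
      have h1 := Finset.mem_filter.mp hp
      have h2 := Finset.mem_product.mp h1.1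
      exact ⟨(Finset.mem_filter.mp h2.1).2, (Finset.mem_filter.mp h2.2).2, h1.2⟩
    have hsum : (∑ p ∈ P, f p.1 * f p.2)
        = ∑ x ∈ F u, ∑ y ∈ F v, (if T.Adj x y then f x * f y else 0) :=
      (Finset.sum_filter (fun p : W × W => T.Adj p.1 p.2)
        (fun p : W × W => f p.1 * f p.2)).trans
        (Finset.sum_product (s := F u) (t := F v)
          (f := fun p : W × W => if T.Adj p.1 p.2 then f p.1 * f p.2 else 0))
    rw [← hsum]
    -- injectivity of projections on P
    have hinj1 : ∀ p ∈ P, ∀ q ∈ P, p.1 = q.1 → p = q := by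
      intro p hp q hq hfst
      obtain ⟨hp1, hp2, hpA⟩ := hPmem p hp
      obtain ⟨hq1, hq2, hqA⟩ := hPmem q hq
      by_contra hne
      have hsnd : p.2 ≠ q.2 := fun h2 => hne (Prod.ext hfst h2)
      have hne' : s(p.1, p.2) ≠ s(q.1, q.2) := by
        intro heq
        rcases Sym2.eq_iff.mp heq with ⟨h1, h2⟩ | ⟨h1, h2⟩
        · exact hsnd h2
        · have := congrArg σ h1
          rw [hp1, hq2] at this
          exact h.ne this
      refine hedge s(p.1, p.2) s(q.1, q.2) hpA hqA hne'
        ⟨p.1, Sym2.mem_mk_left _ _, by rw [hfst]; exact Sym2.mem_mk_left _ _⟩ ?_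
      simp only [Sym2.map_pair_eq]
      rw [hp1, hp2, hq1, hq2]
    have hinj2 : ∀ p ∈ P, ∀ q ∈ P, p.2 = q.2 → p = q := by
      intro p hp q hq hsnd
      obtain ⟨hp1, hp2, hpA⟩ := hPmem p hp
      obtain ⟨hq1, hq2, hqA⟩ := hPmem q hq
      by_contra hne
      have hfst : p.1 ≠ q.1 := fun h1 => hne (Prod.ext h1 hsnd)
      have hne' : s(p.1, p.2) ≠ s(q.1, q.2) := by
        intro heq
        rcases Sym2.eq_iff.mp heq with ⟨h1, h2⟩ | ⟨h1, h2⟩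
        · exact hfst h1
        · have := congrArg σ h1
          rw [hp1, hq2] at this
          exact h.ne this
      refine hedge s(p.1, p.2) s(q.1, q.2) hpA hqA hne'
        ⟨p.2, Sym2.mem_mk_right _ _, by rw [hsnd]; exact Sym2.mem_mk_right _ _⟩ ?_
      simp only [Sym2.map_pair_eq]
      rw [hp1, hp2, hq1, hq2]
    have hA : (∑ p ∈ P, f p.1 ^ 2) ≤ ∑ x ∈ F u, f x ^ 2 := by
      rw [← Finset.sum_image (g := Prod.fst) (f := fun x => f x ^ 2) hinj1]
      refine Finset.sum_le_sum_of_subset_of_nonneg ?_ (fun _ _ _ => sq_nonneg _)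
      intro x hx
      obtain ⟨p, hp, rfl⟩ := Finset.mem_image.mp hx
      exact Finset.mem_filter.mpr ⟨Finset.mem_univ _, (hPmem p hp).1⟩
    have hB : (∑ p ∈ P, f p.2 ^ 2) ≤ ∑ x ∈ F v, f x ^ 2 := by
      rw [← Finset.sum_image (g := Prod.snd) (f := fun x => f x ^ 2) hinj2]
      refine Finset.sum_le_sum_of_subset_of_nonneg ?_ (fun _ _ _ => sq_nonneg _)
      intro x hx
      obtain ⟨p, hp, rfl⟩ := Finset.mem_image.mp hx
      exact Finset.mem_filter.mpr ⟨Finset.mem_univ _, (hPmem p hp).2.1⟩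
    have hCS : (∑ p ∈ P, f p.1 * f p.2)
        ≤ Real.sqrt (∑ p ∈ P, f p.1 ^ 2) * Real.sqrt (∑ p ∈ P, f p.2 ^ 2) := by
      have h1 : (∑ p ∈ P, f p.1 * f p.2) ^ 2
          ≤ (∑ p ∈ P, f p.1 ^ 2) * ∑ p ∈ P, f p.2 ^ 2 :=
        Finset.sum_mul_sq_le_sq_mul_sq P (fun p => f p.1) (fun p => f p.2)
      calc (∑ p ∈ P, f p.1 * f p.2) ≤ |∑ p ∈ P, f p.1 * f p.2| := le_abs_self _
        _ = Real.sqrt ((∑ p ∈ P, f p.1 * f p.2) ^ 2) := (Real.sqrt_sq_eq_abs _).symm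
        _ ≤ Real.sqrt ((∑ p ∈ P, f p.1 ^ 2) * ∑ p ∈ P, f p.2 ^ 2) := Real.sqrt_le_sqrt h1
        _ = _ := Real.sqrt_mul (Finset.sum_nonneg fun _ _ => sq_nonneg _) _
    exact hCS.trans (mul_le_mul (Real.sqrt_le_sqrt hA) (Real.sqrt_le_sqrt hB)
      (Real.sqrt_nonneg _) (Real.sqrt_nonneg _))
  · rw [if_neg h]
    refine le_of_eq (Finset.sum_eq_zero fun x hx => Finset.sum_eq_zero fun y hy => ?_)
    rw [if_neg]
    intro hT
    exact h ((Finset.mem_filter.mp hx).2 ▸ (Finset.mem_filter.mp hy).2 ▸ hhom x y hT)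

end UNE
end
end

section
/- Let G be a finite graph on n vertices. For s ∈ ℕ let A^{(s)} be the n×n matrix whose (u,v) entry is the number of non-backtracking walks of length s from u to v in G, i.e. walks u = w₀, w₁, …, w_s = v with w_i adjacent to w_{i+1} for all i and w_{i+1} ≠ w_{i−1} for 1 ≤ i ≤ s−1. Let s ≥ k ≥ 1 be integers and write s = qk + r with 0 ≤ r < k. Then tr(A^{(s)}) ≤ √n · ‖A^{(k)}‖₂^q · ‖A^{(r)}‖_F, where ‖·‖₂ is the spectral (operator) norm and ‖·‖_F the Frobenius norm. -/
open scoped Classical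

noncomputable section

namespace UNE

/-- Number of non-backtracking walks of length `s` from `u` to `v` in `G`. -/
def nbWalkCount {V : Type*} (G : SimpleGraph V) (s : ℕ) (u v : V) : ℕ :=
  {w : Fin (s + 1) → V |
    w ⟨0, by omega⟩ = u ∧ w ⟨s, by omega⟩ = v ∧
    (∀ i : ℕ, ∀ h : i + 1 ≤ s, G.Adj (w ⟨i, by omega⟩) (w ⟨i + 1, by omega⟩)) ∧
    (∀ i : ℕ, ∀ h : i + 2 ≤ s, w ⟨i + 2, by omega⟩ ≠ w ⟨i, by omega⟩)}.ncard

/-- The matrix `A^{(s)}` counting non-backtracking walks of length `s`. -/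
def nbWalkMatrix {V : Type*} (G : SimpleGraph V) (s : ℕ) : Matrix V V ℝ :=
  Matrix.of fun u v => (nbWalkCount G s u v : ℝ)

/-- Euclidean norm of a vector. -/
def euclNorm {n : Type*} [Fintype n] (x : n → ℝ) : ℝ :=
  Real.sqrt (∑ i, x i ^ 2)

/-- Spectral (ℓ₂ operator) norm of a square real matrix. -/
def specNorm {n : Type*} [Fintype n] (A : Matrix n n ℝ) : ℝ :=
  sSup {r | ∃ x : n → ℝ, euclNorm x = 1 ∧ r = euclNorm (A.mulVec x)}

/-- Frobenius norm of a square real matrix. -/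
def frobNorm {n : Type*} [Fintype n] (A : Matrix n n ℝ) : ℝ :=
  Real.sqrt (∑ u, ∑ v, A u v ^ 2)


section AuxUNE

/-- Helper: the set of non-backtracking walks, so that `nbWalkCount` is its `ncard`. -/
def nbWalkSet {V : Type*} (G : SimpleGraph V) (s : ℕ) (u v : V) : Set (Fin (s + 1) → V) :=
  {w : Fin (s + 1) → V |
    w ⟨0, by omega⟩ = u ∧ w ⟨s, by omega⟩ = v ∧
    (∀ i : ℕ, ∀ h : i + 1 ≤ s, G.Adj (w ⟨i, by omega⟩) (w ⟨i + 1, by omega⟩)) ∧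
    (∀ i : ℕ, ∀ h : i + 2 ≤ s, w ⟨i + 2, by omega⟩ ≠ w ⟨i, by omega⟩)}

lemma nbWalkCount_eq_ncard {V : Type*} (G : SimpleGraph V) (s : ℕ) (u v : V) :
    nbWalkCount G s u v = (nbWalkSet G s u v).ncard := rfl

lemma nbWalkCount_split {V : Type} [Fintype V] (G : SimpleGraph V) (a b : ℕ) (u v : V) :
    nbWalkCount G (a + b) u v ≤ ∑ w : V, nbWalkCount G a u w * nbWalkCount G b w v := by
  classical
  have hcnt : ∀ (s : ℕ) (u v : V), nbWalkCount G s u v = (nbWalkSet G s u v).toFinset.card := by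
    intro s u v; rw [nbWalkCount_eq_ncard, Set.ncard_eq_toFinset_card']
  simp only [hcnt]
  set T : Finset ((Fin (a + 1) → V) × (Fin (b + 1) → V)) :=
    Finset.univ.biUnion
      (fun w => (nbWalkSet G a u w).toFinset ×ˢ (nbWalkSet G b w v).toFinset) with hT
  have h1 : (nbWalkSet G (a + b) u v).toFinset.card ≤ T.card := by
    apply Finset.card_le_card_of_injOn
      (fun f => (fun j : Fin (a + 1) => f ⟨j.1, by omega⟩,
                 fun j : Fin (b + 1) => f ⟨a + j.1, by omega⟩))
    · intro f hf
      rw [Finset.mem_coe, Set.mem_toFinset] at hf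
      obtain ⟨h0, hv, hadj, hnb⟩ := hf
      rw [hT, Finset.mem_coe, Finset.mem_biUnion]
      refine ⟨f ⟨a, by omega⟩, Finset.mem_univ _, ?_⟩
      rw [Finset.mem_product, Set.mem_toFinset, Set.mem_toFinset]
      constructor
      · exact ⟨h0, rfl, fun i hi => hadj i (by omega), fun i hi => hnb i (by omega)⟩
      · refine ⟨rfl, hv, ?_, ?_⟩
        · intro i hi; exact hadj (a + i) (by omega)
        · intro i hi; exact hnb (a + i) (by omega)
    · intro f hf g hg hfg
      have h1 := congrArg Prod.fst hfg
      have h2 := congrArg Prod.snd hfg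
      simp only at h1 h2
      funext i
      rcases i with ⟨iv, hivlt⟩
      by_cases hia : iv ≤ a
      · exact congrFun h1 ⟨iv, by omega⟩
      · have h3 : (⟨iv, hivlt⟩ : Fin (a + b + 1)) = ⟨a + (iv - a), by omega⟩ :=
          Fin.ext (by simp; omega)
        rw [h3]
        exact congrFun h2 ⟨iv - a, by omega⟩
  refine h1.trans ?_
  refine (Finset.card_biUnion_le).trans ?_
  apply le_of_eq
  apply Finset.sum_congr rfl
  intro w _
  rw [Finset.card_product]

variable {n : Type*} [Fintype n]

lemma euclNorm_nonneg (x : n → ℝ) : 0 ≤ euclNorm x := Real.sqrt_nonneg _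

lemma frobNorm_nonneg (A : Matrix n n ℝ) : 0 ≤ frobNorm A := Real.sqrt_nonneg _

lemma euclNorm_sq (x : n → ℝ) : euclNorm x ^ 2 = ∑ i, x i ^ 2 :=
  Real.sq_sqrt (Finset.sum_nonneg fun _ _ => sq_nonneg _)

lemma frobNorm_sq (A : Matrix n n ℝ) : frobNorm A ^ 2 = ∑ u, ∑ v, A u v ^ 2 :=
  Real.sq_sqrt (Finset.sum_nonneg fun _ _ => Finset.sum_nonneg fun _ _ => sq_nonneg _)

lemma euclNorm_smul (c : ℝ) (x : n → ℝ) : euclNorm (c • x) = |c| * euclNorm x := by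
  unfold euclNorm
  rw [← Real.sqrt_sq_eq_abs, ← Real.sqrt_mul (sq_nonneg c), Finset.mul_sum]
  congr 1
  apply Finset.sum_congr rfl
  intro i _
  simp [mul_pow]

lemma euclNorm_eq_zero {x : n → ℝ} (h : euclNorm x = 0) : x = 0 := by
  unfold euclNorm at h
  rw [Real.sqrt_eq_zero (Finset.sum_nonneg fun i _ => sq_nonneg _)] at h
  funext i
  have := (Finset.sum_eq_zero_iff_of_nonneg (fun i _ => sq_nonneg (x i))).mp h i
    (Finset.mem_univ i)
  exact pow_eq_zero_iff (n := 2) (by norm_num) |>.mp this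

lemma mulVec_euclNorm_le_frob (A : Matrix n n ℝ) (x : n → ℝ) :
    euclNorm (A.mulVec x) ≤ frobNorm A * euclNorm x := by
  unfold euclNorm frobNorm
  rw [← Real.sqrt_mul (Finset.sum_nonneg fun u _ => Finset.sum_nonneg fun v _ => sq_nonneg (A u v) :
    (0:ℝ) ≤ ∑ u, ∑ v, A u v ^ 2)]
  apply Real.sqrt_le_sqrt
  rw [Finset.sum_mul]
  apply Finset.sum_le_sum
  intro u _
  rw [Matrix.mulVec, dotProduct]
  exact Finset.sum_mul_sq_le_sq_mul_sq _ _ _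

lemma bddAbove_specSet (A : Matrix n n ℝ) :
    BddAbove {r | ∃ x : n → ℝ, euclNorm x = 1 ∧ r = euclNorm (A.mulVec x)} := by
  refine ⟨frobNorm A, ?_⟩
  rintro r ⟨x, hx, rfl⟩
  calc euclNorm (A.mulVec x) ≤ frobNorm A * euclNorm x := mulVec_euclNorm_le_frob A x
    _ = frobNorm A := by rw [hx, mul_one]

lemma le_specNorm (A : Matrix n n ℝ) (x : n → ℝ) (hx : euclNorm x = 1) :
    euclNorm (A.mulVec x) ≤ specNorm A :=
  le_csSup (bddAbove_specSet A) ⟨x, hx, rfl⟩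

lemma specNorm_nonneg [Nonempty n] (A : Matrix n n ℝ) : 0 ≤ specNorm A := by
  obtain ⟨i0⟩ := ‹Nonempty n›
  have hsum : (∑ i, ((Pi.single i0 (1:ℝ) : n → ℝ)) i ^ 2) = (1:ℝ) := by
    rw [Finset.sum_eq_single i0]
    · simp
    · intro b _ hb; simp [Pi.single_apply, hb]
    · simp
  have h1 : euclNorm (Pi.single i0 (1:ℝ)) = 1 := by
    unfold euclNorm; rw [hsum, Real.sqrt_one]
  exact (euclNorm_nonneg _).trans (le_specNorm A _ h1)

lemma mulVec_euclNorm_le_spec [Nonempty n] (A : Matrix n n ℝ) (x : n → ℝ) :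
    euclNorm (A.mulVec x) ≤ specNorm A * euclNorm x := by
  by_cases hx : euclNorm x = 0
  · rw [euclNorm_eq_zero hx]
    simp [hx, euclNorm, Matrix.mulVec_zero]
  · have hpos : 0 < euclNorm x := lt_of_le_of_ne (euclNorm_nonneg x) (Ne.symm hx)
    have h1 : euclNorm ((euclNorm x)⁻¹ • x) = 1 := by
      rw [euclNorm_smul, abs_inv, abs_of_pos hpos, inv_mul_cancel₀ hx]
    have h2 := le_specNorm A _ h1
    rw [Matrix.mulVec_smul, euclNorm_smul, abs_inv, abs_of_pos hpos] at h2
    calc euclNorm (A.mulVec x) = euclNorm x * ((euclNorm x)⁻¹ * euclNorm (A.mulVec x)) := by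
          field_simp
      _ ≤ euclNorm x * specNorm A := by
          apply mul_le_mul_of_nonneg_left h2 hpos.le
      _ = specNorm A * euclNorm x := mul_comm _ _

lemma frobNorm_mul_le [Nonempty n] (A B : Matrix n n ℝ) :
    frobNorm (A * B) ≤ specNorm A * frobNorm B := by
  have hs := specNorm_nonneg A
  have key : ∀ v : n, (∑ u, (A * B) u v ^ 2) ≤ specNorm A ^ 2 * ∑ u, B u v ^ 2 := by
    intro v
    have h := mulVec_euclNorm_le_spec A (fun w => B w v)
    have h2 := pow_le_pow_left₀ (euclNorm_nonneg _) h 2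
    rw [euclNorm_sq, mul_pow, euclNorm_sq] at h2
    calc (∑ u, (A * B) u v ^ 2) = ∑ u, (A.mulVec (fun w => B w v)) u ^ 2 := by
          apply Finset.sum_congr rfl; intro u _
          rw [Matrix.mul_apply, Matrix.mulVec, dotProduct]
      _ ≤ specNorm A ^ 2 * ∑ u, B u v ^ 2 := h2
  have h3 : frobNorm (A * B) ^ 2 ≤ (specNorm A * frobNorm B) ^ 2 := by
    rw [frobNorm_sq, mul_pow, frobNorm_sq]
    rw [Finset.sum_comm]
    calc (∑ v, ∑ u, (A * B) u v ^ 2) ≤ ∑ v, specNorm A ^ 2 * ∑ u, B u v ^ 2 :=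
          Finset.sum_le_sum fun v _ => key v
      _ = specNorm A ^ 2 * ∑ v, ∑ u, B u v ^ 2 := by rw [← Finset.mul_sum]
      _ = specNorm A ^ 2 * ∑ u, ∑ v, B u v ^ 2 := by rw [Finset.sum_comm]
  exact (pow_le_pow_iff_left₀ (frobNorm_nonneg _) (mul_nonneg hs (frobNorm_nonneg _))
    (by norm_num)).mp h3

lemma frobNorm_pow_mul_le [Nonempty n] (B C : Matrix n n ℝ) (q : ℕ) :
    frobNorm (B ^ q * C) ≤ specNorm B ^ q * frobNorm C := by
  induction q with
  | zero => simp
  | succ q ih =>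
    rw [pow_succ', Matrix.mul_assoc, pow_succ']
    calc frobNorm (B * (B ^ q * C)) ≤ specNorm B * frobNorm (B ^ q * C) :=
          frobNorm_mul_le B _
      _ ≤ specNorm B * (specNorm B ^ q * frobNorm C) :=
          mul_le_mul_of_nonneg_left ih (specNorm_nonneg B)
      _ = specNorm B * specNorm B ^ q * frobNorm C := by ring

lemma pow_entry_nonneg {B : Matrix n n ℝ} (hB : ∀ u v, 0 ≤ B u v) (q : ℕ) :
    ∀ u v, 0 ≤ (B ^ q) u v := by
  induction q with
  | zero =>
    intro u v
    rw [pow_zero]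
    by_cases h : u = v <;> simp [Matrix.one_apply, h]
  | succ q ih =>
    intro u v
    rw [pow_succ, Matrix.mul_apply]
    exact Finset.sum_nonneg fun w _ => mul_nonneg (ih u w) (hB w v)

lemma nbWalkMatrix_nonneg {V : Type} (G : SimpleGraph V) (s : ℕ) (u v : V) :
    0 ≤ nbWalkMatrix G s u v := Nat.cast_nonneg _

lemma nbWalkMatrix_le_pow_mul {V : Type} [Fintype V] (G : SimpleGraph V) (k r : ℕ) (q : ℕ) :
    ∀ u v : V, nbWalkMatrix G (q * k + r) u v ≤
      ((nbWalkMatrix G k) ^ q * nbWalkMatrix G r) u v := by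
  induction q with
  | zero =>
    intro u v
    simp [pow_zero, Matrix.one_mul]
  | succ q ih =>
    intro u v
    have hidx : (q + 1) * k + r = k + (q * k + r) := by ring
    rw [hidx]
    have hsplit := nbWalkCount_split G k (q * k + r) u v
    calc nbWalkMatrix G (k + (q * k + r)) u v
        ≤ ∑ w : V, nbWalkMatrix G k u w * nbWalkMatrix G (q * k + r) w v := by
          show ((nbWalkCount G (k + (q * k + r)) u v : ℝ)) ≤ _
          calc ((nbWalkCount G (k + (q * k + r)) u v : ℝ))
              ≤ ((∑ w : V, nbWalkCount G k u w * nbWalkCount G (q * k + r) w v : ℕ) : ℝ) := by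
                exact_mod_cast hsplit
            _ = ∑ w : V, nbWalkMatrix G k u w * nbWalkMatrix G (q * k + r) w v := by
                push_cast; rfl
      _ ≤ ∑ w : V, nbWalkMatrix G k u w * ((nbWalkMatrix G k) ^ q * nbWalkMatrix G r) w v := by
          apply Finset.sum_le_sum
          intro w _
          exact mul_le_mul_of_nonneg_left (ih w v) (nbWalkMatrix_nonneg G k u w)
      _ = ((nbWalkMatrix G k) ^ (q + 1) * nbWalkMatrix G r) u v := by
          rw [pow_succ', Matrix.mul_assoc, Matrix.mul_apply]

end AuxUNE

/-- Lemma `lem:upper-bound-l-walks`: writing `s = qk + r` with `0 ≤ r < k ≤ s`,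
`tr(A^{(s)}) ≤ √n · ‖A^{(k)}‖₂^q · ‖A^{(r)}‖_F`. -/
theorem trace_nb_walk_matrix_le {V : Type} [Fintype V] (G : SimpleGraph V)
    (s k q r : ℕ) (hk : 1 ≤ k) (hks : k ≤ s) (hs : s = q * k + r) (hr : r < k) :
    (nbWalkMatrix G s).trace ≤
      Real.sqrt (Fintype.card V) * specNorm (nbWalkMatrix G k) ^ q *
        frobNorm (nbWalkMatrix G r) := by
  classical
  subst hs
  rcases isEmpty_or_nonempty V with hV | hV
  · have htr : (nbWalkMatrix G (q * k + r)).trace = 0 := by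
      simp [Matrix.trace]
    rw [htr]
    have hset : {x : ℝ | ∃ y : V → ℝ, euclNorm y = 1 ∧ x = euclNorm ((nbWalkMatrix G k).mulVec y)}
        = ∅ := by
      ext x
      simp only [Set.mem_setOf_eq, Set.mem_empty_iff_false, iff_false]
      rintro ⟨y, hy, _⟩
      have : euclNorm y = 0 := by simp [euclNorm]
      rw [this] at hy; norm_num at hy
    have hspec : (0:ℝ) ≤ specNorm (nbWalkMatrix G k) := by
      unfold specNorm
      rw [hset, Real.sSup_empty]
    exact mul_nonneg (mul_nonneg (Real.sqrt_nonneg _) (pow_nonneg hspec q))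
      (frobNorm_nonneg _)
  · set B := nbWalkMatrix G k with hB
    set C := nbWalkMatrix G r with hC
    set D := B ^ q * C with hD
    have hBnn : ∀ u v : V, 0 ≤ B u v := fun u v => nbWalkMatrix_nonneg G k u v
    have hCnn : ∀ u v : V, 0 ≤ C u v := fun u v => nbWalkMatrix_nonneg G r u v
    have hDnn : ∀ u v : V, 0 ≤ D u v := by
      intro u v
      rw [hD, Matrix.mul_apply]
      exact Finset.sum_nonneg fun w _ =>
        mul_nonneg (pow_entry_nonneg hBnn q u w) (hCnn w v)
    have step1 : (nbWalkMatrix G (q * k + r)).trace ≤ ∑ u : V, D u u := by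
      rw [Matrix.trace]
      exact Finset.sum_le_sum fun u _ => nbWalkMatrix_le_pow_mul G k r q u u
    have step2 : (∑ u : V, D u u) ≤ Real.sqrt (Fintype.card V) * frobNorm D := by
      have hnn : (0:ℝ) ≤ ∑ u : V, D u u := Finset.sum_nonneg fun u _ => hDnn u u
      have hCS : (∑ u : V, D u u) ^ 2 ≤ (Fintype.card V : ℝ) * ∑ u : V, D u u ^ 2 := by
        have h := Finset.sum_mul_sq_le_sq_mul_sq Finset.univ (fun _ : V => (1:ℝ))
          (fun u => D u u)
        simpa [Finset.card_univ] using h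
      have hd1 : (∑ u : V, D u u) ≤ Real.sqrt ((Fintype.card V : ℝ) * ∑ u : V, D u u ^ 2) := by
        rw [Real.le_sqrt hnn (mul_nonneg (Nat.cast_nonneg _)
          (Finset.sum_nonneg fun u _ => sq_nonneg _))]
        exact hCS
      refine hd1.trans ?_
      rw [Real.sqrt_mul (Nat.cast_nonneg _)]
      apply mul_le_mul_of_nonneg_left ?_ (Real.sqrt_nonneg _)
      apply Real.sqrt_le_sqrt
      apply Finset.sum_le_sum
      intro u _
      exact Finset.single_le_sum (fun v _ => sq_nonneg (D u v)) (Finset.mem_univ u)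
    have step3 : frobNorm D ≤ specNorm B ^ q * frobNorm C := frobNorm_pow_mul_le B C q
    calc (nbWalkMatrix G (q * k + r)).trace ≤ ∑ u : V, D u u := step1
      _ ≤ Real.sqrt (Fintype.card V) * frobNorm D := step2
      _ ≤ Real.sqrt (Fintype.card V) * (specNorm B ^ q * frobNorm C) :=
          mul_le_mul_of_nonneg_left step3 (Real.sqrt_nonneg _)
      _ = Real.sqrt (Fintype.card V) * specNorm B ^ q * frobNorm C := by ring

end UNE
end
end
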